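/- arXiv:0903.2248 — 2 statements merged into one kernel-verified Lean document; each statement's English description precedes it below -/
import Mathlib

section
/- Let R be an associative unital ring, M an R-bimodule, and P a finitely generated projective right R-module. Then there is an isomorphism of rings End_{R⋉M}(P ⊗_R (R⋉M)) ≅ End_R(P) ⋉ Hom_R(P, P ⊗_R M), where the right-hand side is the trivial square-zero extension of the ring End_R(P) by its bimodule Hom_R(P, P ⊗_R M) (with bimodule structure given by pre- and post-composition, post-composition using the functor − ⊗_R M). -/
open TrivSqZeroExt MulOpposite

section EndBimodule

variable {R P T : Type} [Ring R] [AddCommGroup P] [Module Rᵐᵒᵖ P]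
  [AddCommGroup T] [Module Rᵐᵒᵖ T]

/-- The `End_R(P)`-bimodule structure on `Hom_R(P, T)`: the left action is postcomposition with
`tm f` (where `tm` sends `f` to "`f ⊗ id`"), packaged as a `Module` structure. -/
def homLeftModule (tm : Module.End Rᵐᵒᵖ P →+* Module.End Rᵐᵒᵖ T) :
    Module (Module.End Rᵐᵒᵖ P) (P →ₗ[Rᵐᵒᵖ] T) where
  smul f α := (tm f).comp α
  one_smul α := by show (tm 1).comp α = α; rw [map_one]; rfl
  mul_smul f g α := by
    show (tm (f * g)).comp α = (tm f).comp ((tm g).comp α)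
    rw [map_mul]; rfl
  smul_add f α β := by
    show (tm f).comp (α + β) = (tm f).comp α + (tm f).comp β
    ext p; simp
  smul_zero f := by show (tm f).comp 0 = 0; ext p; simp
  add_smul f g α := by
    show (tm (f + g)).comp α = (tm f).comp α + (tm g).comp α
    rw [map_add]; ext p; simp
  zero_smul α := by show (tm 0).comp α = 0; rw [map_zero]; ext p; simp

/-- The right action of `End_R(P)` on `Hom_R(P, T)` by precomposition, as a module structure
over the opposite ring. -/
def homRightModule :
    Module (Module.End Rᵐᵒᵖ P)ᵐᵒᵖ (P →ₗ[Rᵐᵒᵖ] T) where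
  smul f α := α.comp f.unop
  one_smul α := rfl
  mul_smul f g α := rfl
  smul_add f α β := by show (α + β).comp f.unop = _; ext p; simp; rfl
  smul_zero f := rfl
  add_smul f g α := by
    show α.comp (f.unop + g.unop) = α.comp f.unop + α.comp g.unop
    ext p; simp
  zero_smul α := by show α.comp 0 = 0; ext p; simp

end EndBimodule


namespace Aux15

variable {R M P T : Type} [Ring R] [AddCommGroup M] [Module R M] [Module Rᵐᵒᵖ M]
  [SMulCommClass R Rᵐᵒᵖ M]
  [AddCommGroup P] [Module Rᵐᵒᵖ P] [AddCommGroup T] [Module Rᵐᵒᵖ T]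
  (β : P → M → T)
  (hβ₁ : ∀ p p' m, β (p + p') m = β p m + β p' m)
  (hβ₂ : ∀ p m m', β p (m + m') = β p m + β p m')
  (hβ₃ : ∀ (r : R) p m, β (op r • p) m = β p (r • m))
  (hβ₄ : ∀ (r : R) p m, β p (op r • m) = op r • β p m)

theorem βp0 (hβ₂ : ∀ p (m m' : M), β p (m + m') = β p m + β p m') (p : P) : β p (0 : M) = 0 := by
  have h := hβ₂ p 0 0; rw [add_zero] at h; exact left_eq_add.mp h

theorem β0m (hβ₁ : ∀ p p' (m : M), β (p + p') m = β p m + β p' m) (m : M) : β (0 : P) m = 0 := by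
  have h := hβ₁ 0 0 m; rw [add_zero] at h; exact left_eq_add.mp h

/-- The `(R ⋉ M)ᵐᵒᵖ`-module structure on `P × T` modelling `P ⊗ (R ⋉ M) ≅ P ⊕ (P ⊗ M)`. -/
def prodModule : Module (TrivSqZeroExt R M)ᵐᵒᵖ (P × T) where
  smul s x := (op s.unop.fst • x.1, op s.unop.fst • x.2 + β x.1 s.unop.snd)
  one_smul x := by
    show (op (unop (1 : (TrivSqZeroExt R M)ᵐᵒᵖ)).fst • x.1,
      op (unop (1 : (TrivSqZeroExt R M)ᵐᵒᵖ)).fst • x.2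
        + β x.1 (unop (1 : (TrivSqZeroExt R M)ᵐᵒᵖ)).snd) = x
    simp [βp0 β hβ₂]
  mul_smul a b x := by
    have key : op ((b.unop * a.unop).fst) • x.2 + β x.1 ((b.unop * a.unop).snd)
        = op a.unop.fst • (op b.unop.fst • x.2 + β x.1 b.unop.snd)
          + β (op b.unop.fst • x.1) a.unop.snd := by
      rw [fst_mul, snd_mul, hβ₂, hβ₃, hβ₄, smul_add]
      rw [show (op (b.unop.fst * a.unop.fst) : Rᵐᵒᵖ) = op a.unop.fst * op b.unop.fst from rfl,
        mul_smul]
      abel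
    show (op ((b.unop * a.unop).fst) • x.1,
        op ((b.unop * a.unop).fst) • x.2 + β x.1 ((b.unop * a.unop).snd))
      = (op a.unop.fst • (op b.unop.fst • x.1),
          op a.unop.fst • (op b.unop.fst • x.2 + β x.1 b.unop.snd)
            + β (op b.unop.fst • x.1) a.unop.snd)
    refine Prod.ext ?_ key
    show (op (b.unop.fst * a.unop.fst) : Rᵐᵒᵖ) • x.1 = _
    rw [show (op (b.unop.fst * a.unop.fst) : Rᵐᵒᵖ) = op a.unop.fst * op b.unop.fst from rfl,
      mul_smul]
  smul_zero a := by
    show (op a.unop.fst • (0 : P), op a.unop.fst • (0 : T) + β 0 a.unop.snd) = (0, 0)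
    simp [β0m β hβ₁]
  smul_add a x y := by
    show (op a.unop.fst • (x.1 + y.1), op a.unop.fst • (x.2 + y.2) + β (x.1 + y.1) a.unop.snd)
      = (op a.unop.fst • x.1 + op a.unop.fst • y.1,
          (op a.unop.fst • x.2 + β x.1 a.unop.snd) + (op a.unop.fst • y.2 + β y.1 a.unop.snd))
    rw [hβ₁, smul_add, smul_add]
    refine Prod.ext rfl ?_
    show _ = _
    abel
  add_smul a b x := by
    show (op ((a.unop + b.unop).fst) • x.1,
        op ((a.unop + b.unop).fst) • x.2 + β x.1 ((a.unop + b.unop).snd))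
      = ((op a.unop.fst • x.1 + op b.unop.fst • x.1),
          (op a.unop.fst • x.2 + β x.1 a.unop.snd) + (op b.unop.fst • x.2 + β x.1 b.unop.snd))
    rw [fst_add, snd_add, hβ₂]
    rw [show (op (a.unop.fst + b.unop.fst) : Rᵐᵒᵖ) = op a.unop.fst + op b.unop.fst from rfl,
      add_smul, add_smul]
    refine Prod.ext rfl ?_
    show _ = _
    abel
  zero_smul x := by
    show (op ((0 : TrivSqZeroExt R M)).fst • x.1,
      op ((0 : TrivSqZeroExt R M)).fst • x.2 + β x.1 ((0 : TrivSqZeroExt R M)).snd) = (0, 0)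
    simp [βp0 β hβ₂]

end Aux15

/-- for a ring `R`, an `R`-bimodule `M` and a finitely generated projective right
`R`-module `P`, one has `End_{R⋉M}(P ⊗_R (R⋉M)) ≅ End_R(P) ⋉ Hom_R(P, P ⊗_R M)` as rings,
where `Q` plays the role of the base change `P ⊗_R (R⋉M)` (specified by its universal
property), `T` plays the role of `P ⊗_R M` (specified by the universal property of the
balanced product `β`), and `tm` sends `f : End_R(P)` to `f ⊗ id_M : T → T`; the bimodule
structure on `Hom_R(P, T)` is by postcomposition with `tm f` and precomposition. -/
theorem end_baseChange_iso_trivSqZeroExt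
    (R M : Type) [Ring R] [AddCommGroup M] [Module R M] [Module Rᵐᵒᵖ M]
    [SMulCommClass R Rᵐᵒᵖ M]
    (P : Type) [AddCommGroup P] [Module Rᵐᵒᵖ P]
    (hproj : Module.Projective Rᵐᵒᵖ P) (hfg : Module.Finite Rᵐᵒᵖ P)
    -- `Q` is the base change of `P` along `inl : R → R ⋉ M`:
    (Q : Type) [AddCommGroup Q] [Module (TrivSqZeroExt R M)ᵐᵒᵖ Q]
    (ι : P →ₛₗ[(RingHom.op (TrivSqZeroExt.inlHom R M) : Rᵐᵒᵖ →+* (TrivSqZeroExt R M)ᵐᵒᵖ)] Q)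
    (hQ : ∀ (N : Type) [AddCommGroup N] [Module (TrivSqZeroExt R M)ᵐᵒᵖ N],
      ∃ e : (Q →ₗ[(TrivSqZeroExt R M)ᵐᵒᵖ] N) ≃+
          (P →ₛₗ[(RingHom.op (TrivSqZeroExt.inlHom R M) :
              Rᵐᵒᵖ →+* (TrivSqZeroExt R M)ᵐᵒᵖ)] N),
        ∀ φ p, e φ p = φ (ι p))
    -- `T` is the tensor product `P ⊗_R M`, given by the universal balanced map `β`:
    (T : Type) [AddCommGroup T] [Module Rᵐᵒᵖ T] (β : P → M → T)
    (hβ₁ : ∀ p p' m, β (p + p') m = β p m + β p' m)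
    (hβ₂ : ∀ p m m', β p (m + m') = β p m + β p m')
    (hβ₃ : ∀ (r : R) p m, β (op r • p) m = β p (r • m))
    (hβ₄ : ∀ (r : R) p m, β p (op r • m) = op r • β p m)
    (hT : ∀ (V : Type) [AddCommGroup V] [Module Rᵐᵒᵖ V] (β' : P → M → V),
      (∀ p p' m, β' (p + p') m = β' p m + β' p' m) →
      (∀ p m m', β' p (m + m') = β' p m + β' p m') →
      (∀ (r : R) p m, β' (op r • p) m = β' p (r • m)) →
      (∀ (r : R) p m, β' p (op r • m) = op r • β' p m) →
      ∃! φ : T →ₗ[Rᵐᵒᵖ] V, ∀ p m, φ (β p m) = β' p m)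
    -- `tm f = f ⊗ id_M`:
    (tm : Module.End Rᵐᵒᵖ P →+* Module.End Rᵐᵒᵖ T)
    (htm : ∀ (f : Module.End Rᵐᵒᵖ P) p m, tm f (β p m) = β (f p) m) :
    letI := homLeftModule (R := R) (P := P) (T := T) tm
    letI := homRightModule (R := R) (P := P) (T := T)
    letI : SMulCommClass (Module.End Rᵐᵒᵖ P) (Module.End Rᵐᵒᵖ P)ᵐᵒᵖ (P →ₗ[Rᵐᵒᵖ] T) :=
      ⟨fun f g α => rfl⟩
    Nonempty
      (Module.End (TrivSqZeroExt R M)ᵐᵒᵖ Q ≃+*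
        TrivSqZeroExt (Module.End Rᵐᵒᵖ P) (P →ₗ[Rᵐᵒᵖ] T)) := by
  letI instL := homLeftModule (R := R) (P := P) (T := T) tm
  letI instRt := homRightModule (R := R) (P := P) (T := T)
  letI instC : SMulCommClass (Module.End Rᵐᵒᵖ P) (Module.End Rᵐᵒᵖ P)ᵐᵒᵖ (P →ₗ[Rᵐᵒᵖ] T) :=
    ⟨fun f g α => rfl⟩
  have hβp0 : ∀ p : P, β p 0 = 0 := Aux15.βp0 β hβ₂
  have hβ0m : ∀ m : M, β 0 m = 0 := Aux15.β0m β hβ₁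
  letI instN : Module (TrivSqZeroExt R M)ᵐᵒᵖ (P × T) := Aux15.prodModule β hβ₁ hβ₂ hβ₃ hβ₄
  letI instQR : Module Rᵐᵒᵖ Q := Module.compHom Q
    (RingHom.op (TrivSqZeroExt.inlHom R M) : Rᵐᵒᵖ →+* (TrivSqZeroExt R M)ᵐᵒᵖ)
  -- the map `T → Q`, `β p m ↦ op (inr m) • ι p`
  obtain ⟨φj, hφj, -⟩ := hT Q (fun p m => (op (inr m : TrivSqZeroExt R M)) • ι p)
    (fun p p' m => by (try dsimp only); rw [map_add, smul_add])
    (fun p m m' => by (try dsimp only); rw [inr_add, op_add, add_smul])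
    (fun r p m => by
      (try dsimp only)
      rw [map_smulₛₗ]
      show op (inr m : TrivSqZeroExt R M) • (op (inl r : TrivSqZeroExt R M) • ι p) = _
      rw [← mul_smul, ← op_mul, inl_mul_inr])
    (fun r p m => by
      show op (inr (op r • m) : TrivSqZeroExt R M) • ι p
        = op (inl r : TrivSqZeroExt R M) • (op (inr m : TrivSqZeroExt R M) • ι p)
      rw [← mul_smul, ← op_mul, inr_mul_inl])
  have hφjsm : ∀ (r : R) (t : T), φj (op r • t) = op (inl r : TrivSqZeroExt R M) • φj t :=
    fun r t => by rw [map_smul]; rfl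
  -- the range of β spans T
  have hspan : Submodule.span Rᵐᵒᵖ {t : T | ∃ p m, β p m = t} = ⊤ := by
    obtain ⟨φ, hφ, hu⟩ := hT (T ⧸ Submodule.span Rᵐᵒᵖ {t : T | ∃ p m, β p m = t})
      (fun _ _ => 0) (by simp) (by simp) (by simp) (by simp)
    have h1 := hu (Submodule.span Rᵐᵒᵖ {t : T | ∃ p m, β p m = t}).mkQ
      (fun p m => by
        rw [Submodule.mkQ_apply, Submodule.Quotient.mk_eq_zero]
        exact Submodule.subset_span ⟨p, m, rfl⟩)
    have h2 := hu 0 (fun p m => rfl)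
    rw [eq_top_iff]
    intro t _
    rw [← Submodule.Quotient.mk_eq_zero, ← Submodule.mkQ_apply, h1, ← h2]
    rfl
  -- `op (inr m)` kills the image of `φj`
  have hkill : ∀ (m : M) (t : T), op (inr m : TrivSqZeroExt R M) • φj t = 0 := by
    have key : ∀ t, t ∈ Submodule.span Rᵐᵒᵖ {t : T | ∃ p m, β p m = t} →
        ∀ m, op (inr m : TrivSqZeroExt R M) • φj t = 0 := by
      intro t ht
      induction ht using Submodule.span_induction with
      | mem x hx =>
        obtain ⟨p, m', rfl⟩ := hx
        intro m
        rw [hφj, ← mul_smul, ← op_mul, inr_mul_inr]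
        rw [show (op (0 : TrivSqZeroExt R M) : (TrivSqZeroExt R M)ᵐᵒᵖ) = 0 from rfl]
        exact zero_smul _ _
      | zero => intro m; rw [map_zero, smul_zero]
      | add x y hx hy ihx ihy => intro m; rw [map_add, smul_add, ihx m, ihy m, add_zero]
      | smul r x hx ih =>
        intro m
        calc op (inr m : TrivSqZeroExt R M) • φj (r • x)
            = op (inr m : TrivSqZeroExt R M)
                • (op (inl (unop r) : TrivSqZeroExt R M) • φj x) := by rw [map_smul]; rfl
          _ = op ((inl (unop r) : TrivSqZeroExt R M) * inr m) • φj x := by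
              rw [← mul_smul, ← op_mul]
          _ = op (inr ((unop r) • m) : TrivSqZeroExt R M) • φj x := by rw [inl_mul_inr]
          _ = 0 := ih _
    intro m t
    exact key t (hspan ▸ Submodule.mem_top) m
  -- the decomposition Q ≅ P × T
  obtain ⟨eN, heN⟩ := hQ (P × T)
  let κ : P →ₛₗ[(RingHom.op (TrivSqZeroExt.inlHom R M) :
      Rᵐᵒᵖ →+* (TrivSqZeroExt R M)ᵐᵒᵖ)] (P × T) :=
    { toFun := fun p => (p, 0)
      map_add' := fun p p' => by
        show ((p + p', (0:T)) : P × T) = (p, 0) + (p', 0)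
        rw [Prod.mk_add_mk, add_zero]
      map_smul' := fun r p => by
        show ((r • p, (0:T)) : P × T) = (op (unop r) • p, op (unop r) • (0:T) + β p 0)
        rw [op_unop, hβp0, smul_zero, add_zero] }
  let θ : Q →ₗ[(TrivSqZeroExt R M)ᵐᵒᵖ] (P × T) := eN.symm κ
  have hθι : ∀ p, θ (ι p) = ((p, 0) : P × T) := fun p => by
    have h := heN (eN.symm κ) p
    rw [AddEquiv.apply_symm_apply] at h
    exact h.symm
  let ψ : (P × T) →ₗ[(TrivSqZeroExt R M)ᵐᵒᵖ] Q :=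
    { toFun := fun x => ι x.1 + φj x.2
      map_add' := fun x y => by
        show ι (x.1 + y.1) + φj (x.2 + y.2) = (ι x.1 + φj x.2) + (ι y.1 + φj y.2)
        rw [map_add, map_add]; abel
      map_smul' := fun s x => by
        show ι (op s.unop.fst • x.1) + φj (op s.unop.fst • x.2 + β x.1 s.unop.snd)
          = s • (ι x.1 + φj x.2)
        have e1 : ι (op s.unop.fst • x.1)
            = op (inl s.unop.fst : TrivSqZeroExt R M) • ι x.1 := by rw [map_smulₛₗ]; rfl
        have e2 : φj (op s.unop.fst • x.2 + β x.1 s.unop.snd)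
            = op (inl s.unop.fst : TrivSqZeroExt R M) • φj x.2
              + op (inr s.unop.snd : TrivSqZeroExt R M) • ι x.1 := by
          rw [map_add, hφjsm, hφj]
        have e3 : s • (ι x.1 + φj x.2)
            = op s.unop • ι x.1 + op s.unop • φj x.2 := by rw [smul_add, op_unop]
        have e4 : (op s.unop : (TrivSqZeroExt R M)ᵐᵒᵖ) • ι x.1
            = op (inl s.unop.fst : TrivSqZeroExt R M) • ι x.1
              + op (inr s.unop.snd : TrivSqZeroExt R M) • ι x.1 := by
          rw [← add_smul, ← op_add, inl_fst_add_inr_snd_eq]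
        have e5 : (op s.unop : (TrivSqZeroExt R M)ᵐᵒᵖ) • φj x.2
            = op (inl s.unop.fst : TrivSqZeroExt R M) • φj x.2 := by
          conv_lhs => rw [← inl_fst_add_inr_snd_eq s.unop]
          rw [op_add, add_smul, hkill, add_zero]
        rw [e1, e2, e3, e4, e5]; abel }
  have hθφj : ∀ t, θ (φj t) = (((0:P), t) : P × T) := by
    let g : T →ₗ[Rᵐᵒᵖ] P × T :=
      { toFun := fun t => θ (φj t)
        map_add' := fun t t' => by (try dsimp only); rw [map_add, map_add]
        map_smul' := fun r t => by
          show θ (φj (r • t)) = r • θ (φj t)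
          have h1 : φj (r • t) = op (inl (unop r) : TrivSqZeroExt R M) • φj t := by
            rw [map_smul]; rfl
          rw [h1, map_smul]
          show ((op (unop r) • (θ (φj t)).1, op (unop r) • (θ (φj t)).2
            + β (θ (φj t)).1 0) : P × T) = r • θ (φj t)
          rw [hβp0, add_zero, op_unop]
          rfl }
    obtain ⟨φ₂, hφ₂, hu₂⟩ := hT (P × T) (fun p m => (((0:P), β p m) : P × T))
      (fun p p' m => by (try dsimp only); rw [hβ₁]; simp)
      (fun p m m' => by (try dsimp only); rw [hβ₂]; simp)
      (fun r p m => by (try dsimp only); rw [hβ₃])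
      (fun r p m => by (try dsimp only); rw [hβ₄, Prod.smul_mk, smul_zero])
    have h1 := hu₂ g (fun p m => by
      show θ (φj (β p m)) = (((0:P), β p m) : P × T)
      rw [hφj, map_smul, hθι]
      show ((op ((0:R)) • p, op ((0:R)) • (0:T) + β p m) : P × T) = ((0:P), β p m)
      simp)
    have h2 := hu₂ (LinearMap.inr Rᵐᵒᵖ P T) (fun p m => rfl)
    have hg : g = LinearMap.inr Rᵐᵒᵖ P T := h1.trans h2.symm
    exact fun t => LinearMap.congr_fun hg t
  obtain ⟨eQ, heQ⟩ := hQ Q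
  have hψθ : ∀ q, ψ (θ q) = q := by
    have h : ψ ∘ₗ θ = LinearMap.id := eQ.injective (LinearMap.ext fun p => by
      rw [heQ, heQ]
      show ψ (θ (ι p)) = LinearMap.id (ι p)
      rw [hθι]
      show ι p + φj 0 = ι p
      rw [map_zero, add_zero])
    exact fun q => LinearMap.congr_fun h q
  have hθψ : ∀ x : P × T, θ (ψ x) = x := fun x => by
    show θ (ι x.1 + φj x.2) = x
    rw [map_add, hθι, hθφj]
    show ((x.1 + 0, 0 + x.2) : P × T) = x
    simp
  -- decompose endomorphisms of `P × T`
  let Aof : Module.End (TrivSqZeroExt R M)ᵐᵒᵖ (P × T) → Module.End Rᵐᵒᵖ P := fun G =>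
    { toFun := fun p => (G ((p, 0) : P × T)).1
      map_add' := fun p p' => by
        have h : ((p + p', (0:T)) : P × T) = (p, 0) + (p', 0) := by simp
        (try dsimp only); rw [h, map_add]; rfl
      map_smul' := fun r p => by
        have h : ((r • p, (0:T)) : P × T)
            = (op (inl (unop r) : TrivSqZeroExt R M)) • ((p, (0:T)) : P × T) := by
          show (r • p, (0:T)) = (op (unop r) • p, op (unop r) • (0:T) + β p 0)
          rw [op_unop, hβp0, smul_zero, add_zero]
        (try dsimp only); rw [h, map_smul]
        show op (unop r) • (G ((p, 0) : P × T)).1 = r • (G ((p, 0) : P × T)).1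
        rw [op_unop] }
  let Cof : Module.End (TrivSqZeroExt R M)ᵐᵒᵖ (P × T) → (P →ₗ[Rᵐᵒᵖ] T) := fun G =>
    { toFun := fun p => (G ((p, 0) : P × T)).2
      map_add' := fun p p' => by
        have h : ((p + p', (0:T)) : P × T) = (p, 0) + (p', 0) := by simp
        (try dsimp only); rw [h, map_add]; rfl
      map_smul' := fun r p => by
        have h : ((r • p, (0:T)) : P × T)
            = (op (inl (unop r) : TrivSqZeroExt R M)) • ((p, (0:T)) : P × T) := by
          show (r • p, (0:T)) = (op (unop r) • p, op (unop r) • (0:T) + β p 0)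
          rw [op_unop, hβp0, smul_zero, add_zero]
        (try dsimp only); rw [h, map_smul]
        show op (unop r) • (G ((p, 0) : P × T)).2 + β (G ((p, 0) : P × T)).1 0
          = r • (G ((p, 0) : P × T)).2
        rw [hβp0, add_zero, op_unop] }
  have hG0t : ∀ (G : Module.End (TrivSqZeroExt R M)ᵐᵒᵖ (P × T)) (t : T),
      G (((0:P), t) : P × T) = (((0:P), tm (Aof G) t) : P × T) := by
    intro G
    let g : T →ₗ[Rᵐᵒᵖ] P × T :=
      { toFun := fun t => G (((0:P), t) : P × T)
        map_add' := fun t t' => by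
          have h : (((0:P), t + t') : P × T) = ((0:P), t) + ((0:P), t') := by simp
          (try dsimp only); rw [h, map_add]
        map_smul' := fun r t => by
          have h : (((0:P), r • t) : P × T)
              = (op (inl (unop r) : TrivSqZeroExt R M)) • (((0:P), t) : P × T) := by
            show ((0:P), r • t) = (op (unop r) • (0:P), op (unop r) • t + β 0 0)
            rw [op_unop, hβ0m, smul_zero, add_zero]
          show G (((0:P), r • t) : P × T) = r • G (((0:P), t) : P × T)
          rw [h, map_smul]
          show ((op (unop r) • (G (((0:P), t) : P × T)).1,
            op (unop r) • (G (((0:P), t) : P × T)).2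
              + β (G (((0:P), t) : P × T)).1 0) : P × T) = r • G (((0:P), t) : P × T)
          rw [hβp0, add_zero, op_unop]
          rfl }
    let g' : T →ₗ[Rᵐᵒᵖ] P × T := (LinearMap.inr Rᵐᵒᵖ P T) ∘ₗ (tm (Aof G) : T →ₗ[Rᵐᵒᵖ] T)
    obtain ⟨φ₃, hφ₃, hu₃⟩ := hT (P × T) (fun p m => (((0:P), β ((Aof G) p) m) : P × T))
      (fun p p' m => by (try dsimp only); rw [map_add, hβ₁]; simp)
      (fun p m m' => by (try dsimp only); rw [hβ₂]; simp)
      (fun r p m => by (try dsimp only); rw [map_smul, hβ₃])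
      (fun r p m => by (try dsimp only); rw [hβ₄, Prod.smul_mk, smul_zero])
    have h1 := hu₃ g (fun p m => by
      show G (((0:P), β p m) : P × T) = (((0:P), β (Aof G p) m) : P × T)
      have h : (((0:P), β p m) : P × T)
          = (op (inr m : TrivSqZeroExt R M)) • ((p, (0:T)) : P × T) := by
        show ((0:P), β p m) = (op ((0:R)) • p, op ((0:R)) • (0:T) + β p m)
        simp
      rw [h, map_smul]
      show ((op ((0:R)) • (G ((p, 0) : P × T)).1,
        op ((0:R)) • (G ((p, 0) : P × T)).2 + β (G ((p, 0) : P × T)).1 m) : P × T)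
          = (((0:P), β (Aof G p) m) : P × T)
      simp
      rfl)
    have h2 := hu₃ g' (fun p m => by
      show (((0:P), tm (Aof G) (β p m)) : P × T) = (((0:P), β (Aof G p) m) : P × T)
      rw [htm])
    have hg : g = g' := h1.trans h2.symm
    exact fun t => LinearMap.congr_fun hg t
  have hAof : ∀ (G : Module.End (TrivSqZeroExt R M)ᵐᵒᵖ (P × T)) (v : P × T),
      G v = ((Aof G v.1, Cof G v.1 + tm (Aof G) v.2) : P × T) := by
    intro G v
    have h : v = ((v.1, (0:T)) : P × T) + ((0:P), v.2) := by simp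
    conv_lhs => rw [h]
    rw [map_add, hG0t]
    exact Prod.ext (add_zero _) rfl
  -- endomorphisms of `P × T` built from a pair
  let Gof : TrivSqZeroExt (Module.End Rᵐᵒᵖ P) (P →ₗ[Rᵐᵒᵖ] T) →
      Module.End (TrivSqZeroExt R M)ᵐᵒᵖ (P × T) := fun x =>
    { toFun := fun v => ((x.fst v.1, x.snd v.1 + tm x.fst v.2) : P × T)
      map_add' := fun v w => by
        show ((x.fst (v.1 + w.1), x.snd (v.1 + w.1) + tm x.fst (v.2 + w.2)) : P × T)
          = (x.fst v.1 + x.fst w.1,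
              (x.snd v.1 + tm x.fst v.2) + (x.snd w.1 + tm x.fst w.2))
        rw [map_add, map_add, map_add]
        refine Prod.ext rfl ?_
        show x.snd v.1 + x.snd w.1 + (tm x.fst v.2 + tm x.fst w.2) = _
        abel
      map_smul' := fun s v => by
        show ((x.fst (op s.unop.fst • v.1),
            x.snd (op s.unop.fst • v.1)
              + tm x.fst (op s.unop.fst • v.2 + β v.1 s.unop.snd)) : P × T)
          = (op s.unop.fst • x.fst v.1,
              op s.unop.fst • (x.snd v.1 + tm x.fst v.2) + β (x.fst v.1) s.unop.snd)
        rw [map_smul, map_smul, map_add, map_smul, htm, smul_add]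
        refine Prod.ext rfl ?_
        show op s.unop.fst • x.snd v.1 + (op s.unop.fst • tm x.fst v.2 + β (x.fst v.1) s.unop.snd) = _
        abel }
  have hGofA : ∀ G : Module.End (TrivSqZeroExt R M)ᵐᵒᵖ (P × T),
      Gof (inl (Aof G) + inr (Cof G)) = G := by
    intro G
    refine LinearMap.ext fun v => ?_
    show (((inl (Aof G) + inr (Cof G) :
        TrivSqZeroExt (Module.End Rᵐᵒᵖ P) (P →ₗ[Rᵐᵒᵖ] T)).fst v.1,
      (inl (Aof G) + inr (Cof G) :
        TrivSqZeroExt (Module.End Rᵐᵒᵖ P) (P →ₗ[Rᵐᵒᵖ] T)).snd v.1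
        + tm (inl (Aof G) + inr (Cof G) :
          TrivSqZeroExt (Module.End Rᵐᵒᵖ P) (P →ₗ[Rᵐᵒᵖ] T)).fst v.2) : P × T) = G v
    rw [hAof G v]
    simp
  have hfstGof : ∀ x, Aof (Gof x) = x.fst := fun x => LinearMap.ext fun p => by
    show (Gof x ((p, 0) : P × T)).1 = x.fst p
    rfl
  have hsndGof : ∀ x, Cof (Gof x) = x.snd := fun x => LinearMap.ext fun p => by
    show x.snd p + tm x.fst 0 = x.snd p
    rw [map_zero, add_zero]
  have hAcomp : ∀ G₁ G₂ : Module.End (TrivSqZeroExt R M)ᵐᵒᵖ (P × T),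
      Aof (G₁ ∘ₗ G₂) = Aof G₁ * Aof G₂ := fun G₁ G₂ => LinearMap.ext fun p => by
    show (G₁ (G₂ ((p, 0) : P × T))).1 = Aof G₁ (Aof G₂ p)
    rw [hAof G₁ (G₂ ((p, 0) : P × T))]
    rfl
  have hCcomp : ∀ G₁ G₂ : Module.End (TrivSqZeroExt R M)ᵐᵒᵖ (P × T),
      Cof (G₁ ∘ₗ G₂) = (tm (Aof G₁)).comp (Cof G₂) + (Cof G₁).comp (Aof G₂) :=
    fun G₁ G₂ => LinearMap.ext fun p => by
      show (G₁ (G₂ ((p, 0) : P × T))).2 = tm (Aof G₁) (Cof G₂ p) + Cof G₁ (Aof G₂ p)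
      rw [hAof G₁ (G₂ ((p, 0) : P × T))]
      exact add_comm _ _
  have hAadd : ∀ G₁ G₂ : Module.End (TrivSqZeroExt R M)ᵐᵒᵖ (P × T),
      Aof (G₁ + G₂) = Aof G₁ + Aof G₂ := fun G₁ G₂ => LinearMap.ext fun p => by
    show ((G₁ + G₂) ((p, 0) : P × T)).1 = (G₁ ((p, 0) : P × T)).1 + (G₂ ((p, 0) : P × T)).1
    rw [LinearMap.add_apply]; rfl
  have hCadd : ∀ G₁ G₂ : Module.End (TrivSqZeroExt R M)ᵐᵒᵖ (P × T),
      Cof (G₁ + G₂) = Cof G₁ + Cof G₂ := fun G₁ G₂ => LinearMap.ext fun p => by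
    show ((G₁ + G₂) ((p, 0) : P × T)).2 = (G₁ ((p, 0) : P × T)).2 + (G₂ ((p, 0) : P × T)).2
    rw [LinearMap.add_apply]; rfl
  refine ⟨{
    toFun := fun F => inl (Aof (θ ∘ₗ F ∘ₗ ψ)) + inr (Cof (θ ∘ₗ F ∘ₗ ψ)),
    invFun := fun x => ψ ∘ₗ (Gof x) ∘ₗ θ,
    left_inv := ?_, right_inv := ?_, map_mul' := ?_, map_add' := ?_ }⟩
  · intro F
    refine LinearMap.ext fun q => ?_
    show ψ (Gof (inl (Aof (θ ∘ₗ F ∘ₗ ψ)) + inr (Cof (θ ∘ₗ F ∘ₗ ψ))) (θ q)) = F q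
    rw [hGofA]
    show ψ (θ (F (ψ (θ q)))) = F q
    rw [hψθ, hψθ]
  · intro x
    have hc : θ ∘ₗ (ψ ∘ₗ Gof x ∘ₗ θ) ∘ₗ ψ = Gof x := LinearMap.ext fun v => by
      show θ (ψ (Gof x (θ (ψ v)))) = Gof x v
      rw [hθψ, hθψ]
    show inl (Aof (θ ∘ₗ (ψ ∘ₗ Gof x ∘ₗ θ) ∘ₗ ψ))
        + inr (Cof (θ ∘ₗ (ψ ∘ₗ Gof x ∘ₗ θ) ∘ₗ ψ)) = x
    rw [hc, hfstGof, hsndGof, inl_fst_add_inr_snd_eq]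
  · intro F G
    have hc : θ ∘ₗ (F * G) ∘ₗ ψ = (θ ∘ₗ F ∘ₗ ψ) ∘ₗ (θ ∘ₗ G ∘ₗ ψ) := LinearMap.ext fun v => by
      show θ (F (G (ψ v))) = θ (F (ψ (θ (G (ψ v)))))
      rw [hψθ]
    show inl (Aof (θ ∘ₗ (F * G) ∘ₗ ψ)) + inr (Cof (θ ∘ₗ (F * G) ∘ₗ ψ))
      = (inl (Aof (θ ∘ₗ F ∘ₗ ψ)) + inr (Cof (θ ∘ₗ F ∘ₗ ψ)))
        * (inl (Aof (θ ∘ₗ G ∘ₗ ψ)) + inr (Cof (θ ∘ₗ G ∘ₗ ψ)))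
    rw [hc, hAcomp, hCcomp]
    refine TrivSqZeroExt.ext ?_ ?_
    · simp
    · simp only [snd_add, snd_inl, snd_inr, snd_mul, fst_add, fst_inl, fst_inr, zero_add,
        add_zero]
      rfl
  · intro F G
    have hadd : θ ∘ₗ (F + G) ∘ₗ ψ = θ ∘ₗ F ∘ₗ ψ + θ ∘ₗ G ∘ₗ ψ := LinearMap.ext fun v => by
      show θ ((F + G) (ψ v)) = θ (F (ψ v)) + θ (G (ψ v))
      rw [LinearMap.add_apply, map_add]
    show inl (Aof (θ ∘ₗ (F + G) ∘ₗ ψ)) + inr (Cof (θ ∘ₗ (F + G) ∘ₗ ψ))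
      = (inl (Aof (θ ∘ₗ F ∘ₗ ψ)) + inr (Cof (θ ∘ₗ F ∘ₗ ψ)))
        + (inl (Aof (θ ∘ₗ G ∘ₗ ψ)) + inr (Cof (θ ∘ₗ G ∘ₗ ψ)))
    rw [hadd, hAadd, hCadd, inl_add, inr_add]
    abel
end

section
/- For any pointed map f : X → Y of pointed topological spaces, there is a natural homeomorphism Ω(hofib(f)) ≅ hofib(Ω f), where hofib(f) is the homotopy fiber (the pullback of the path fibration P Y → Y along f) and Ω denotes the based loop space. -/
open scoped unitInterval

noncomputable section

/-- A topological space "is a CW complex" if it is homeomorphic to (the topological space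
underlying) some CW complex. -/
def IsCWComplex (X : Type u) [TopologicalSpace X] : Prop :=
  ∃ K : TopCat.{u}, Nonempty (TopCat.CWComplex K) ∧ Nonempty (K ≃ₜ X)

/-- A space is `n`-connected (`n : ℤ`) if all homotopy groups `π_i` vanish for `i ≤ n`,
at every basepoint. -/
def TConn (n : ℤ) (X : Type*) [TopologicalSpace X] : Prop :=
  ∀ (x : X) (i : ℕ), (i : ℤ) ≤ n → Subsingleton (HomotopyGroup (Fin i) X x)

/-- The homotopy fiber of `f : X → Y` over `y`: pairs of a point of `X` and a path from `y`
to its image. -/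
def HoFib {X Y : Type*} [TopologicalSpace X] [TopologicalSpace Y] (f : C(X, Y)) (y : Y) :
    Type _ :=
  {p : X × C(I, Y) // p.2 0 = y ∧ p.2 1 = f p.1}

instance {X Y : Type*} [TopologicalSpace X] [TopologicalSpace Y] (f : C(X, Y)) (y : Y) :
    TopologicalSpace (HoFib f y) :=
  inferInstanceAs (TopologicalSpace {p : X × C(I, Y) // p.2 0 = y ∧ p.2 1 = f p.1})

/-- A map is `n`-connected (`n : ℤ`) iff all its homotopy fibers are `(n-1)`-connected,
where `(-1)`-connected means nonempty: equivalently, `f` induces isomorphisms on `π_i`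
for `i < n` and a surjection on `π_n`. -/
def ConnMap (n : ℤ) {X Y : Type*} [TopologicalSpace X] [TopologicalSpace Y]
    (f : C(X, Y)) : Prop :=
  ∀ y : Y, (0 ≤ n → Nonempty (HoFib f y)) ∧
    ∀ (z : HoFib f y) (i : ℕ), (i : ℤ) < n → Subsingleton (HomotopyGroup (Fin i) (HoFib f y) z)

/-- The relation defining the smash product `X ∧ Y`: collapse the wedge
`(X × {y₀}) ∪ ({x₀} × Y)` to a point. -/
def smashSetoid {X Y : Type*} (x₀ : X) (y₀ : Y) : Setoid (X × Y) where
  r a b := a = b ∨ ((a.1 = x₀ ∨ a.2 = y₀) ∧ (b.1 = x₀ ∨ b.2 = y₀))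
  iseqv := by
    constructor
    · exact fun a => Or.inl rfl
    · rintro a b (rfl | h); exacts [Or.inl rfl, Or.inr ⟨h.2, h.1⟩]
    · rintro a b c (rfl | hab) hbc
      · exact hbc
      · rcases hbc with rfl | hbc
        · exact Or.inr hab
        · exact Or.inr ⟨hab.1, hbc.2⟩

/-- The smash product `X ∧ Y` of pointed spaces. -/
def Smash {X Y : Type*} [TopologicalSpace X] [TopologicalSpace Y] (x₀ : X) (y₀ : Y) :
    Type _ :=
  Quotient (smashSetoid x₀ y₀)

instance {X Y : Type*} [TopologicalSpace X] [TopologicalSpace Y] (x₀ : X) (y₀ : Y) :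
    TopologicalSpace (Smash x₀ y₀) :=
  inferInstanceAs (TopologicalSpace (Quotient (smashSetoid x₀ y₀)))

/-- The basepoint of the smash product. -/
def Smash.pt {X Y : Type*} [TopologicalSpace X] [TopologicalSpace Y] (x₀ : X) (y₀ : Y) :
    Smash x₀ y₀ :=
  Quotient.mk _ (x₀, y₀)

/-- Functoriality of the smash product in both variables (for pointed maps). -/
def Smash.map {X Y X' Y' : Type*} [TopologicalSpace X] [TopologicalSpace Y]
    [TopologicalSpace X'] [TopologicalSpace Y'] {x₀ : X} {y₀ : Y} {x₀' : X'} {y₀' : Y'}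
    (f : C(X, X')) (g : C(Y, Y')) (hf : f x₀ = x₀') (hg : g y₀ = y₀') :
    C(Smash x₀ y₀, Smash x₀' y₀') where
  toFun := Quotient.map' (fun p => (f p.1, g p.2)) (by
    rintro a b (rfl | ⟨ha, hb⟩)
    · exact Or.inl rfl
    · refine Or.inr ⟨?_, ?_⟩
      · rcases ha with h | h
        · exact Or.inl (by simp [h, hf])
        · exact Or.inr (by simp [h, hg])
      · rcases hb with h | h
        · exact Or.inl (by simp [h, hf])
        · exact Or.inr (by simp [h, hg]))
  continuous_toFun := by
    exact Continuous.quotient_map' (by fun_prop) _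

end

/-- The based loop space `Ω(Z, z)`. -/
def OmegaSp (Z : Type*) [TopologicalSpace Z] (z : Z) : Type _ :=
  {γ : C(I, Z) // γ 0 = z ∧ γ 1 = z}

instance (Z : Type*) [TopologicalSpace Z] (z : Z) : TopologicalSpace (OmegaSp Z z) :=
  inferInstanceAs (TopologicalSpace {γ : C(I, Z) // γ 0 = z ∧ γ 1 = z})

/-- The map `Ωf : ΩX → ΩY` induced on loop spaces by `f`. -/
def OmegaMap {X Y : Type*} [TopologicalSpace X] [TopologicalSpace Y] (f : C(X, Y))
    (x : X) : C(OmegaSp X x, OmegaSp Y (f x)) where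
  toFun γ := ⟨f.comp γ.1, by simp [γ.2.1, γ.2.2]⟩
  continuous_toFun := by
    apply Continuous.subtype_mk
    exact (ContinuousMap.continuous_postcomp f).comp continuous_subtype_val

/-- for any pointed map `f : X → Y` there is a natural homeomorphism
`Ω(hofib f) ≅ hofib(Ωf)`, where `hofib` is the strict homotopy fiber over the basepoint
and `Ω` is the based loop space; concretely `Γ ↦ (t ↦ Γ(t)₁, s ↦ t ↦ Γ(t)₂(s))`. -/
theorem loop_hoFib_homeo {X Y : Type} [TopologicalSpace X] [TopologicalSpace Y]
    (f : C(X, Y)) (x₀ : X) :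
    ∃ h : @Homeomorph (OmegaSp (HoFib f (f x₀))
          ⟨(x₀, ContinuousMap.const I (f x₀)), by constructor <;> simp⟩)
        (HoFib (OmegaMap f x₀) ⟨ContinuousMap.const I (f x₀), by constructor <;> simp⟩)
        (instTopologicalSpaceOmegaSp _ _) (instTopologicalSpaceHoFib _ _),
      ∀ Γ, (∀ t : I, ((h Γ).1.1).1 t = (Γ.1 t).1.1) ∧
           (∀ s t : I, ((h Γ).1.2 s).1 t = (Γ.1 t).1.2 s) := by
  classical
  letI : TopologicalSpace (OmegaSp X x₀) := instTopologicalSpaceOmegaSp _ _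
  letI : TopologicalSpace (OmegaSp Y (f x₀)) := instTopologicalSpaceOmegaSp _ _
  letI : TopologicalSpace (OmegaSp (HoFib f (f x₀))
      ⟨(x₀, ContinuousMap.const I (f x₀)), by constructor <;> simp⟩) :=
    instTopologicalSpaceOmegaSp _ _
  letI : TopologicalSpace (HoFib (OmegaMap f x₀)
      ⟨ContinuousMap.const I (f x₀), by constructor <;> simp⟩) :=
    instTopologicalSpaceHoFib _ _
  -- forward map
  refine ⟨{
    toFun := fun Γ =>
      ⟨(⟨⟨fun t => (Γ.1 t).1.1, by fun_prop⟩,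
          by constructor
             · exact congrArg (fun p => p.1.1) Γ.2.1
             · exact congrArg (fun p => p.1.1) Γ.2.2⟩,
        ⟨fun s => ⟨⟨fun t => (Γ.1 t).1.2 s, by
              have : Continuous fun t : I => (Γ.1 t).1.2 :=
                (continuous_snd.comp (continuous_subtype_val.comp Γ.1.continuous))
              exact (continuous_eval_const s).comp this⟩,
            by constructor
               · exact congrArg (fun p => p.1.2 s) Γ.2.1
               · exact congrArg (fun p => p.1.2 s) Γ.2.2⟩,
          by
            apply Continuous.subtype_mk
            apply ContinuousMap.continuous_of_continuous_uncurry
            have h1 : Continuous fun q : I × I => (Γ.1 q.2).1.2 :=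
              continuous_snd.comp
                (continuous_subtype_val.comp (Γ.1.continuous.comp continuous_snd))
            exact h1.eval continuous_fst⟩),
        by
          constructor
          · apply Subtype.ext; apply ContinuousMap.ext; intro t
            exact (Γ.1 t).2.1
          · apply Subtype.ext; apply ContinuousMap.ext; intro t
            exact (Γ.1 t).2.2⟩
    invFun := fun q =>
      ⟨⟨fun t => ⟨(q.1.1.1 t, ⟨fun s => (q.1.2 s).1 t, by
            have h1 : Continuous fun s : I => (q.1.2 s).1 :=
              continuous_subtype_val.comp q.1.2.continuous
            exact h1.eval continuous_const⟩),
          by constructor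
             · exact congrArg (fun γ : OmegaSp Y (f x₀) => γ.1 t) q.2.1
             · exact congrArg (fun γ : OmegaSp Y (f x₀) => γ.1 t) q.2.2⟩,
        by
          apply Continuous.subtype_mk
          apply Continuous.prodMk
          · exact q.1.1.1.continuous
          · apply ContinuousMap.continuous_of_continuous_uncurry
            have h1 : Continuous fun p : I × I => (q.1.2 p.2).1 :=
              continuous_subtype_val.comp (q.1.2.continuous.comp continuous_snd)
            exact h1.eval continuous_fst⟩,
        by
          constructor
          · apply Subtype.ext; apply Prod.ext
            · exact q.1.1.2.1
            · apply ContinuousMap.ext; intro s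
              exact (q.1.2 s).2.1
          · apply Subtype.ext; apply Prod.ext
            · exact q.1.1.2.2
            · apply ContinuousMap.ext; intro s
              exact (q.1.2 s).2.2⟩
    left_inv := by
      intro Γ
      apply Subtype.ext; apply ContinuousMap.ext; intro t
      apply Subtype.ext; apply Prod.ext
      · rfl
      · apply ContinuousMap.ext; intro s; rfl
    right_inv := by
      intro q
      apply Subtype.ext; apply Prod.ext
      · apply Subtype.ext; apply ContinuousMap.ext; intro t; rfl
      · apply ContinuousMap.ext; intro s
        apply Subtype.ext; apply ContinuousMap.ext; intro t; rfl
    continuous_toFun := by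
      apply Continuous.subtype_mk
      apply Continuous.prodMk
      · apply Continuous.subtype_mk
        apply ContinuousMap.continuous_of_continuous_uncurry
        have h1 : Continuous fun p : OmegaSp (HoFib f (f x₀))
            ⟨(x₀, ContinuousMap.const I (f x₀)), by constructor <;> simp⟩ × I =>
            (p.1.1 p.2).1.1 := by
          have he : Continuous fun p : OmegaSp (HoFib f (f x₀))
              ⟨(x₀, ContinuousMap.const I (f x₀)), by constructor <;> simp⟩ × I =>
              p.1.1 p.2 := by
            exact continuous_eval.comp
              ((continuous_subtype_val.comp continuous_fst).prodMk continuous_snd)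
          exact continuous_fst.comp (continuous_subtype_val.comp he)
        exact h1
      · apply ContinuousMap.continuous_of_continuous_uncurry
        apply Continuous.subtype_mk
        apply ContinuousMap.continuous_of_continuous_uncurry
        have he : Continuous fun p : (OmegaSp (HoFib f (f x₀))
            ⟨(x₀, ContinuousMap.const I (f x₀)), by constructor <;> simp⟩ × I) × I =>
            (p.1.1.1 p.2).1.2 p.1.2 := by
          have h0 : Continuous fun p : (OmegaSp (HoFib f (f x₀))
              ⟨(x₀, ContinuousMap.const I (f x₀)), by constructor <;> simp⟩ × I) × I =>
              (p.1.1.1 p.2).1.2 := by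
            have he2 : Continuous fun p : (OmegaSp (HoFib f (f x₀))
                ⟨(x₀, ContinuousMap.const I (f x₀)), by constructor <;> simp⟩ × I) × I =>
                p.1.1.1 p.2 :=
              continuous_eval.comp
                ((continuous_subtype_val.comp (continuous_fst.comp
                  continuous_fst)).prodMk continuous_snd)
            exact continuous_snd.comp (continuous_subtype_val.comp he2)
          exact h0.eval (continuous_snd.comp continuous_fst)
        exact he
    continuous_invFun := by
      apply Continuous.subtype_mk
      apply ContinuousMap.continuous_of_continuous_uncurry
      apply Continuous.subtype_mk
      apply Continuous.prodMk
      · fun_prop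
      · apply ContinuousMap.continuous_of_continuous_uncurry
        have h1 : Continuous fun p : (HoFib (OmegaMap f x₀)
            ⟨ContinuousMap.const I (f x₀), by constructor <;> simp⟩ × I) × I =>
            (p.1.1.1.2 p.2).1 p.1.2 := by
          have h0 : Continuous fun p : (HoFib (OmegaMap f x₀)
              ⟨ContinuousMap.const I (f x₀), by constructor <;> simp⟩ × I) × I =>
              (p.1.1.1.2 p.2).1 := by
            have he2 : Continuous fun p : (HoFib (OmegaMap f x₀)
                ⟨ContinuousMap.const I (f x₀), by constructor <;> simp⟩ × I) × I =>
                p.1.1.1.2 p.2 :=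
              continuous_eval.comp
                ((continuous_snd.comp (continuous_subtype_val.comp
                  (continuous_fst.comp continuous_fst))).prodMk continuous_snd)
            exact continuous_subtype_val.comp he2
          exact h0.eval (continuous_snd.comp continuous_fst)
        exact h1 }, ?_⟩
  intro Γ
  exact ⟨fun t => rfl, fun s t => rfl⟩
end
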